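/- Let E be a finite-dimensional real inner product space and (X, 𝒜, μ) a measure space, and let c₀, C₀ > 0. For each k ∈ ℕ let A_k : X → (continuous linear endomorphisms of E) and A : X → (continuous linear endomorphisms of E) be strongly measurable, and assume that for μ-a.e. x ∈ X: A_k(x) and A(x) are self-adjoint, ⟨A_k(x)v, v⟩ ≥ c₀‖v‖² and ‖A_k(x)v‖ ≤ C₀‖v‖ for all v ∈ E (and likewise for A(x)), and A_k(x) → A(x) as k → ∞. Let f_k, f ∈ L²(μ; E) with sup_k ‖f_k‖_{L²(μ;E)} < ∞, and suppose f_k converges to f weakly in L²(μ;E) in the sense that ∫_X ⟨f_k, g⟩ dμ → ∫_X ⟨f, g⟩ dμ for every g ∈ L²(μ;E). Then ∫_X ⟨A f, f⟩ dμ ≤ liminf_{k→∞} ∫_X ⟨A_k f_k, f_k⟩ dμ. -/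

import Mathlib

open MeasureTheory Filter Topology
open scoped RealInnerProductSpace ENNReal

section Aux

variable {E : Type*} [NormedAddCommGroup E] [InnerProductSpace ℝ E]
  {X : Type*} [MeasurableSpace X] {μ : Measure X}

lemma aux_integrable_inner {u v : X → E} (hu : MemLp u 2 μ) (hv : MemLp v 2 μ) :
    Integrable (fun x => ⟪u x, v x⟫) μ := by
  have h := L2.integrable_inner (𝕜 := ℝ) (hu.toLp u) (hv.toLp v)
  refine h.congr ?_
  filter_upwards [hu.coeFn_toLp, hv.coeFn_toLp] with x h1 h2
  rw [h1, h2]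

lemma aux_abs_integral_inner_le {u v : X → E} (hu : MemLp u 2 μ) (hv : MemLp v 2 μ) :
    |∫ x, ⟪u x, v x⟫ ∂μ| ≤ (eLpNorm u 2 μ).toReal * (eLpNorm v 2 μ).toReal := by
  have h := abs_real_inner_le_norm (hu.toLp u) (hv.toLp v)
  rw [L2.inner_def, Lp.norm_toLp, Lp.norm_toLp] at h
  refine le_trans (le_of_eq ?_) h
  congr 1
  apply integral_congr_ae
  filter_upwards [hu.coeFn_toLp, hv.coeFn_toLp] with x h1 h2
  rw [h1, h2]

lemma aux_eLpNorm_toReal_sq {u : X → E} (hu : MemLp u 2 μ) :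
    (eLpNorm u 2 μ).toReal ^ 2 = ∫ x, ‖u x‖ ^ 2 ∂μ := by
  have h := real_inner_self_eq_norm_sq (hu.toLp u)
  rw [L2.inner_def, Lp.norm_toLp] at h
  rw [← h]
  apply integral_congr_ae
  filter_upwards [hu.coeFn_toLp] with x h1
  rw [h1, real_inner_self_eq_norm_sq]

lemma aux_aesm {B : X → E →L[ℝ] E} {u : X → E} (hB : StronglyMeasurable B)
    (hu : AEStronglyMeasurable u μ) :
    AEStronglyMeasurable (fun x => B x (u x)) μ := by
  have hpair : AEStronglyMeasurable (fun x => (B x, u x)) μ :=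
    hB.aestronglyMeasurable.prodMk hu
  exact (isBoundedBilinearMap_apply (𝕜 := ℝ)).continuous.comp_aestronglyMeasurable hpair

lemma aux_memLp {B : X → E →L[ℝ] E} {u : X → E} {C₀ : ℝ} (hB : StronglyMeasurable B)
    (hu : MemLp u 2 μ) (hbound : ∀ᵐ x ∂μ, ∀ v : E, ‖B x v‖ ≤ C₀ * ‖v‖) :
    MemLp (fun x => B x (u x)) 2 μ :=
  hu.of_le_mul (aux_aesm hB hu.1) (hbound.mono fun x hx => hx (u x))

end Aux

/-- Weak lower semicontinuity of quadratic dissipation functionals with pointwise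
convergent, uniformly elliptic, uniformly bounded, self-adjoint coefficients. -/
theorem dissipation_weak_lower_semicontinuity
    {E : Type*} [NormedAddCommGroup E] [InnerProductSpace ℝ E] [FiniteDimensional ℝ E]
    {X : Type*} [MeasurableSpace X] (μ : Measure X)
    (c₀ C₀ : ℝ) (hc₀ : 0 < c₀) (hC₀ : 0 < C₀)
    (A : ℕ → X → E →L[ℝ] E) (Alim : X → E →L[ℝ] E)
    (hAmeas : ∀ k, StronglyMeasurable (A k)) (hAlimmeas : StronglyMeasurable Alim)
    (hae : ∀ᵐ x ∂μ,
      (∀ k, (∀ v w : E, ⟪A k x v, w⟫ = ⟪v, A k x w⟫) ∧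
            (∀ v : E, c₀ * ‖v‖ ^ 2 ≤ ⟪A k x v, v⟫) ∧
            (∀ v : E, ‖A k x v‖ ≤ C₀ * ‖v‖)) ∧
      ((∀ v w : E, ⟪Alim x v, w⟫ = ⟪v, Alim x w⟫) ∧
        (∀ v : E, c₀ * ‖v‖ ^ 2 ≤ ⟪Alim x v, v⟫) ∧
        (∀ v : E, ‖Alim x v‖ ≤ C₀ * ‖v‖)) ∧
      Tendsto (fun k => A k x) atTop (𝓝 (Alim x)))
    (f : ℕ → X → E) (flim : X → E)
    (hf : ∀ k, MemLp (f k) 2 μ) (hflim : MemLp flim 2 μ)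
    (hbdd : ∃ M : ℝ≥0∞, M < ⊤ ∧ ∀ k, eLpNorm (f k) 2 μ ≤ M)
    (hweak : ∀ g : X → E, MemLp g 2 μ →
      Tendsto (fun k => ∫ x, ⟪f k x, g x⟫ ∂μ) atTop (𝓝 (∫ x, ⟪flim x, g x⟫ ∂μ))) :
    ∫ x, ⟪Alim x (flim x), flim x⟫ ∂μ ≤
      Filter.liminf (fun k => ∫ x, ⟪A k x (f k x), f k x⟫ ∂μ) atTop := by
  obtain ⟨M, hMlt, hM⟩ := hbdd
  set M' : ℝ := M.toReal with hM'def
  -- Memℒp facts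
  have hm1 : ∀ k, MemLp (fun x => A k x (f k x)) 2 μ := fun k =>
    aux_memLp (hAmeas k) (hf k) (hae.mono fun x hx => (hx.1 k).2.2)
  have hmA : ∀ k, MemLp (fun x => A k x (flim x)) 2 μ := fun k =>
    aux_memLp (hAmeas k) hflim (hae.mono fun x hx => (hx.1 k).2.2)
  have hmAl : MemLp (fun x => Alim x (flim x)) 2 μ :=
    aux_memLp hAlimmeas hflim (hae.mono fun x hx => hx.2.1.2.2)
  -- integrability facts
  have i1 : ∀ k, Integrable (fun x => ⟪A k x (f k x), f k x⟫) μ := fun k =>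
    aux_integrable_inner (hm1 k) (hf k)
  have i2 : ∀ k, Integrable (fun x => ⟪A k x (flim x), f k x⟫) μ := fun k =>
    aux_integrable_inner (hmA k) (hf k)
  have i3 : ∀ k, Integrable (fun x => ⟪A k x (flim x), flim x⟫) μ := fun k =>
    aux_integrable_inner (hmA k) hflim
  have iNsq : Integrable (fun x => ‖flim x‖ ^ 2) μ := by
    have := aux_integrable_inner hflim hflim
    refine this.congr (Eventually.of_forall fun x => ?_)
    simpa using real_inner_self_eq_norm_sq (flim x)
  set L : ℝ := ∫ x, ⟪Alim x (flim x), flim x⟫ ∂μ with hLdef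
  set a : ℕ → ℝ := fun k => ∫ x, ⟪A k x (flim x), f k x⟫ ∂μ with hadef
  set b : ℕ → ℝ := fun k => ∫ x, ⟪A k x (flim x), flim x⟫ ∂μ with hbdef
  set v : ℕ → ℝ := fun k => ∫ x, ⟪A k x (f k x), f k x⟫ ∂μ with hvdef
  -- b → L by dominated convergence
  have hb : Tendsto b atTop (𝓝 L) := by
    refine tendsto_integral_of_dominated_convergence
      (fun x => C₀ * ‖flim x‖ ^ 2) (fun k => (i3 k).1) (iNsq.const_mul C₀) ?_ ?_
    · intro k
      filter_upwards [hae] with x hx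
      have h1 := (hx.1 k).2.2 (flim x)
      calc ‖⟪A k x (flim x), flim x⟫‖ ≤ ‖A k x (flim x)‖ * ‖flim x‖ := by
            rw [Real.norm_eq_abs]; exact abs_real_inner_le_norm _ _
        _ ≤ C₀ * ‖flim x‖ * ‖flim x‖ :=
            mul_le_mul_of_nonneg_right h1 (norm_nonneg _)
        _ = C₀ * ‖flim x‖ ^ 2 := by ring
    · filter_upwards [hae] with x hx
      have h1 : Tendsto (fun k => A k x (flim x)) atTop (𝓝 (Alim x (flim x))) :=
        ((ContinuousLinearMap.apply ℝ E (flim x)).continuous.tendsto (Alim x)).comp hx.2.2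
      exact h1.inner tendsto_const_nhds
  -- I k := ∫ ‖(A k - Alim) flim‖² → 0
  set I : ℕ → ℝ := fun k => ∫ x, ‖A k x (flim x) - Alim x (flim x)‖ ^ 2 ∂μ with hIdef
  have hGm : ∀ k, MemLp (fun x => A k x (flim x) - Alim x (flim x)) 2 μ := fun k =>
    (hmA k).sub hmAl
  have hI : Tendsto I atTop (𝓝 0) := by
    have h0 : (0 : ℝ) = ∫ x, (0 : ℝ) ∂μ := by simp
    rw [h0]
    refine tendsto_integral_of_dominated_convergence
      (fun x => 4 * C₀ ^ 2 * ‖flim x‖ ^ 2)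
      (fun k => ((hGm k).1.norm.pow 2)) ((iNsq.const_mul _)) ?_ ?_
    · intro k
      filter_upwards [hae] with x hx
      have h1 := (hx.1 k).2.2 (flim x)
      have h2 := hx.2.1.2.2 (flim x)
      have h3 : ‖A k x (flim x) - Alim x (flim x)‖ ≤ 2 * C₀ * ‖flim x‖ := by
        calc ‖A k x (flim x) - Alim x (flim x)‖
            ≤ ‖A k x (flim x)‖ + ‖Alim x (flim x)‖ := norm_sub_le _ _
          _ ≤ C₀ * ‖flim x‖ + C₀ * ‖flim x‖ := add_le_add h1 h2
          _ = 2 * C₀ * ‖flim x‖ := by ring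
      have hnn : (0 : ℝ) ≤ ‖A k x (flim x) - Alim x (flim x)‖ := norm_nonneg _
      calc ‖‖A k x (flim x) - Alim x (flim x)‖ ^ 2‖
          = ‖A k x (flim x) - Alim x (flim x)‖ ^ 2 := by
            rw [Real.norm_eq_abs, abs_of_nonneg (by positivity)]
        _ ≤ (2 * C₀ * ‖flim x‖) ^ 2 := by
            exact pow_le_pow_left₀ hnn h3 2
        _ = 4 * C₀ ^ 2 * ‖flim x‖ ^ 2 := by ring
    · filter_upwards [hae] with x hx
      have h1 : Tendsto (fun k => A k x (flim x)) atTop (𝓝 (Alim x (flim x))) :=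
        ((ContinuousLinearMap.apply ℝ E (flim x)).continuous.tendsto (Alim x)).comp hx.2.2
      have h2 : Tendsto (fun k => A k x (flim x) - Alim x (flim x)) atTop (𝓝 0) := by
        have := h1.sub_const (Alim x (flim x))
        simpa using this
      have h3 := (h2.norm.pow 2)
      simpa using h3
  -- e k := ∫ ⟪(A k - Alim) flim, f k⟫ → 0
  set e : ℕ → ℝ := fun k => ∫ x, ⟪A k x (flim x) - Alim x (flim x), f k x⟫ ∂μ with hedef
  have hfk_norm : ∀ k, (eLpNorm (f k) 2 μ).toReal ≤ M' := fun k =>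
    ENNReal.toReal_mono hMlt.ne (hM k)
  have hM'nonneg : 0 ≤ M' := ENNReal.toReal_nonneg
  have he_bound : ∀ k, |e k| ≤ Real.sqrt (I k) * M' := by
    intro k
    have h1 := aux_abs_integral_inner_le (hGm k) (hf k)
    have h2 : (eLpNorm (fun x => A k x (flim x) - Alim x (flim x)) 2 μ).toReal
        = Real.sqrt (I k) := by
      simp only [hIdef]
      rw [← aux_eLpNorm_toReal_sq (hGm k), Real.sqrt_sq ENNReal.toReal_nonneg]
    rw [h2] at h1
    exact h1.trans (mul_le_mul_of_nonneg_left (hfk_norm k) (Real.sqrt_nonneg _))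
  have he : Tendsto e atTop (𝓝 0) := by
    have hsq : Tendsto (fun k => Real.sqrt (I k) * M') atTop (𝓝 0) := by
      have := (Real.continuous_sqrt.tendsto 0).comp hI
      simpa using this.mul_const M'
    exact squeeze_zero_norm (fun k => by simpa [Real.norm_eq_abs] using he_bound k) hsq
  -- w k := ∫ ⟪Alim flim, f k⟫ → L
  set w : ℕ → ℝ := fun k => ∫ x, ⟪Alim x (flim x), f k x⟫ ∂μ with hwdef
  have hw : Tendsto w atTop (𝓝 L) := by
    have h := hweak (fun x => Alim x (flim x)) hmAl
    have h1 : ∀ k, w k = ∫ x, ⟪f k x, Alim x (flim x)⟫ ∂μ := by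
      intro k
      simp only [hwdef]
      exact integral_congr_ae (Eventually.of_forall fun x => real_inner_comm _ _)
    have h2 : L = ∫ x, ⟪flim x, Alim x (flim x)⟫ ∂μ := by
      simp only [hLdef]
      exact integral_congr_ae (Eventually.of_forall fun x => real_inner_comm _ _)
    rw [h2]
    exact h.congr fun k => (h1 k).symm
  -- a = e + w, so a → L
  have ha : Tendsto a atTop (𝓝 L) := by
    have hsplit : ∀ k, a k = e k + w k := by
      intro k
      have hsub : e k = a k - w k := by
        simp only [hedef, hadef, hwdef]
        rw [← integral_sub (i2 k) (aux_integrable_inner hmAl (hf k))]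
        exact integral_congr_ae (Eventually.of_forall fun x => by
          simp [inner_sub_left])
      rw [hsub]; ring
    have := he.add hw
    rw [zero_add] at this
    exact this.congr fun k => (hsplit k).symm
  -- pointwise inequality ⇒ integral inequality: 2 a k - b k ≤ v k
  have hineq : ∀ k, 2 * a k - b k ≤ v k := by
    intro k
    have hint : Integrable (fun x => 2 * ⟪A k x (flim x), f k x⟫
        - ⟪A k x (flim x), flim x⟫) μ := ((i2 k).const_mul 2).sub (i3 k)
    have hLHS : 2 * a k - b k = ∫ x, (2 * ⟪A k x (flim x), f k x⟫
        - ⟪A k x (flim x), flim x⟫) ∂μ := by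
      rw [integral_sub ((i2 k).const_mul 2) (i3 k), integral_const_mul]
    rw [hLHS]
    refine integral_mono_ae hint (i1 k) ?_
    filter_upwards [hae] with x hx
    have hsymm := (hx.1 k).1
    have hell := (hx.1 k).2.1
    have h0 : 0 ≤ ⟪A k x (f k x - flim x), f k x - flim x⟫ := by
      refine le_trans ?_ (hell (f k x - flim x))
      positivity
    have e1 : ⟪A k x (f k x - flim x), f k x - flim x⟫
        = ⟪A k x (f k x), f k x⟫ - ⟪A k x (f k x), flim x⟫
          - ⟪A k x (flim x), f k x⟫ + ⟪A k x (flim x), flim x⟫ := by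
      rw [map_sub, inner_sub_left, inner_sub_right, inner_sub_right]
      ring
    have e2 : ⟪A k x (f k x), flim x⟫ = ⟪A k x (flim x), f k x⟫ := by
      rw [hsymm (f k x) (flim x), real_inner_comm]
    rw [e1, e2] at h0
    linarith
  -- upper bound on v for coboundedness
  have hub : ∀ k, v k ≤ C₀ * M' * M' := by
    intro k
    have h1 := aux_abs_integral_inner_le (hm1 k) (hf k)
    have h2 : eLpNorm (fun x => A k x (f k x)) 2 μ ≤ C₀.toNNReal • eLpNorm (f k) 2 μ := by
      refine eLpNorm_le_nnreal_smul_eLpNorm_of_ae_le_mul ?_ 2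
      filter_upwards [hae] with x hx
      have := (hx.1 k).2.2 (f k x)
      rw [← NNReal.coe_le_coe]
      push_cast
      rw [Real.coe_toNNReal _ hC₀.le]
      simpa using this
    have h3 : (eLpNorm (fun x => A k x (f k x)) 2 μ).toReal ≤ C₀ * M' := by
      have h4 : eLpNorm (fun x => A k x (f k x)) 2 μ ≤ C₀.toNNReal * M :=
        h2.trans (by
          rw [ENNReal.smul_def, smul_eq_mul]
          exact mul_le_mul_right (hM k) _)
      have h5 : (C₀.toNNReal : ℝ≥0∞) * M ≠ ⊤ := ENNReal.mul_ne_top ENNReal.coe_ne_top hMlt.ne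
      calc (eLpNorm (fun x => A k x (f k x)) 2 μ).toReal
          ≤ ((C₀.toNNReal : ℝ≥0∞) * M).toReal := ENNReal.toReal_mono h5 h4
        _ = C₀ * M' := by
            rw [ENNReal.toReal_mul, ENNReal.coe_toReal, Real.coe_toNNReal _ hC₀.le]
    calc v k ≤ |v k| := le_abs_self _
      _ ≤ (eLpNorm (fun x => A k x (f k x)) 2 μ).toReal * (eLpNorm (f k) 2 μ).toReal := h1
      _ ≤ (C₀ * M') * M' := by
          refine mul_le_mul h3 (hfk_norm k) ENNReal.toReal_nonneg ?_
          positivity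
  -- conclude
  have hconv : Tendsto (fun k => 2 * a k - b k) atTop (𝓝 L) := by
    have := (ha.const_mul 2).sub hb
    have h2 : 2 * L - L = L := by ring
    rwa [h2] at this
  have hcv : IsCoboundedUnder (· ≥ ·) atTop v :=
    isCoboundedUnder_ge_of_eventually_le atTop (Eventually.of_forall hub)
  calc L = liminf (fun k => 2 * a k - b k) atTop := hconv.liminf_eq.symm
    _ ≤ liminf v atTop :=
        liminf_le_liminf (Eventually.of_forall hineq) hconv.isBoundedUnder_ge hcv
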